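/- Let (▷, f, ·_V) and (▷', f', ·_V') be crossed systems of a 4-algebra A by a vector space V with ·_V = ·_V'. A linear map ψ : V # A → V #' A of the form ψ(x,a) = (x + r(a), α(a)), with r : A → V linear and α : A → A linear, is an algebra morphism if and only if α is an algebra map and for all a, b ∈ A, x ∈ V: (M1) a▷x = α(a)▷'x + r(a)·_V x, and (M2) f(a,b) = f'(α(a),α(b)) + α(a)▷'r(b) + α(b)▷'r(a) + r(a)·_V r(b) − r(a·b). Moreover every algebra morphism ψ : V # A → V #' A that restricts to the identity on V has this form, and ψ is bijective iff α is bijective. -/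
import Mathlib


structure FourAlgebra (k : Type*) (A : Type*) [Field k] [AddCommGroup A] [Module k A] where
  mul : A →ₗ[k] A →ₗ[k] A
  comm : ∀ a b : A, mul a b = mul b a
  four : ∀ a : A, mul (mul a a) (mul a a) = 0

/-- Characterization of morphisms between crossed products V # A and V #' A (same ·_V)
which stabilize V: they are of the form ψ(x,a) = (x + r(a), α(a)) with α an algebra map
and (M1), (M2) satisfied; and ψ is bijective iff α is. -/
theorem stmt13 (k A V : Type*) [Field k] [AddCommGroup A] [Module k A]
    [AddCommGroup V] [Module k V] (h2 : (2 : k) ≠ 0) (FA : FourAlgebra k A)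
    (tr tr' : A →ₗ[k] V →ₗ[k] V) (f f' : A →ₗ[k] A →ₗ[k] V) (mv : V →ₗ[k] V →ₗ[k] V) :
    let p : V × A → V × A → V × A := fun z w =>
      (mv z.1 w.1 + tr z.2 w.1 + tr w.2 z.1 + f z.2 w.2, FA.mul z.2 w.2)
    let p' : V × A → V × A → V × A := fun z w =>
      (mv z.1 w.1 + tr' z.2 w.1 + tr' w.2 z.1 + f' z.2 w.2, FA.mul z.2 w.2)
    -- (▷, f, ·_V) and (▷', f', ·_V) are crossed systems:
    ((∀ z w, p z w = p w z) ∧ (∀ z, p (p z z) (p z z) = 0)) →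
    ((∀ z w, p' z w = p' w z) ∧ (∀ z, p' (p' z z) (p' z z) = 0)) →
    -- (i) ψ(x,a) = (x + r(a), α(a)) is a morphism iff α is an algebra map and (M1),(M2):
    ((∀ (r : A →ₗ[k] V) (α : A →ₗ[k] A),
        (∀ z w : V × A,
            (fun z : V × A => (z.1 + r z.2, α z.2)) (p z w)
              = p' ((fun z : V × A => (z.1 + r z.2, α z.2)) z)
                   ((fun z : V × A => (z.1 + r z.2, α z.2)) w)) ↔
          ((∀ a b : A, α (FA.mul a b) = FA.mul (α a) (α b)) ∧
           (∀ (a : A) (x : V), tr a x = tr' (α a) x + mv (r a) x) ∧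
           (∀ a b : A, f a b = f' (α a) (α b) + tr' (α a) (r b) + tr' (α b) (r a)
              + mv (r a) (r b) - r (FA.mul a b)))) ∧
    -- (ii) every morphism stabilizing V has this form:
     (∀ ψ : V × A →ₗ[k] V × A,
        (∀ z w : V × A, ψ (p z w) = p' (ψ z) (ψ w)) →
        (∀ x : V, ψ (x, 0) = (x, 0)) →
        ∃ (r : A →ₗ[k] V) (α : A →ₗ[k] A), ∀ z : V × A, ψ z = (z.1 + r z.2, α z.2)) ∧
    -- (iii) ψ is bijective iff α is bijective:
     (∀ (r : A →ₗ[k] V) (α : A →ₗ[k] A),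
        Function.Bijective (fun z : V × A => (z.1 + r z.2, α z.2)) ↔
          Function.Bijective α)) := by
  intro p p' hCS hCS'
  have hmv : ∀ x y : V, mv x y = mv y x := by
    intro x y
    have h := congrArg Prod.fst (hCS.1 (x, 0) (y, 0))
    simpa [p] using h
  refine ⟨?_, ?_, ?_⟩
  · intro r α
    constructor
    · intro hψ
      refine ⟨?_, ?_, ?_⟩
      · intro a b
        have h := congrArg Prod.snd (hψ (0, a) (0, b))
        simpa [p, p'] using h
      · intro a x
        have h := congrArg Prod.fst (hψ (0, a) (x, 0))
        simp [p, p'] at h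
        rw [h]; abel
      · intro a b
        have h := congrArg Prod.fst (hψ (0, a) (0, b))
        simp [p, p'] at h
        rw [eq_sub_iff_add_eq, h]
        abel
    · rintro ⟨halg, hM1, hM2⟩ z w
      refine Prod.ext ?_ (by simpa [p, p'] using halg z.2 w.2)
      simp only [p, p', map_add]
      rw [hM1 z.2 w.1, hM1 w.2 z.1, hM2 z.2 w.2, hmv (r w.2) z.1]
      simp only [LinearMap.add_apply]
      abel
  · intro ψ hmor hstab
    refine ⟨(LinearMap.fst k V A) ∘ₗ ψ ∘ₗ LinearMap.inr k V A,
            (LinearMap.snd k V A) ∘ₗ ψ ∘ₗ LinearMap.inr k V A, ?_⟩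
    intro z
    have hsum : ψ z = ψ (z.1, 0) + ψ (0, z.2) := by
      rw [← map_add]; congr 1; simp
    rw [hsum, hstab]
    refine Prod.ext ?_ ?_ <;> simp
  · intro r α
    constructor
    · intro hb
      constructor
      · intro a b hab
        have h1 : (fun z : V × A => (z.1 + r z.2, α z.2)) (0, a)
            = (fun z : V × A => (z.1 + r z.2, α z.2)) (r a - r b, b) := by
          simp [hab]
        have h2 := hb.1 h1
        have := congrArg Prod.snd h2
        simpa using this
      · intro c
        obtain ⟨z, hz⟩ := hb.2 (0, c)
        exact ⟨z.2, congrArg Prod.snd hz⟩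
    · intro hb
      constructor
      · rintro ⟨x, a⟩ ⟨y, b⟩ h
        simp only [Prod.mk.injEq] at h
        have hab : a = b := hb.1 h.2
        subst hab
        exact Prod.ext (add_right_cancel h.1) rfl
      · rintro ⟨y, c⟩
        obtain ⟨a, ha⟩ := hb.2 c
        exact ⟨(y - r a, a), by simp [ha]⟩
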